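/- Let (V, ω) be a real symplectic vector space and for a subspace W ⊆ V let U_W denote the group of symplectic automorphisms of V (linear automorphisms g with ω(gx, gy) = ω(x,y) for all x,y) that fix W^⊥ = {x ∈ V : ω(x,y) = 0 for all y ∈ W} pointwise. Then for isotropic subspaces I, J ⊆ V one has U_J ⊆ U_I if and only if J ⊆ I. -/

import Mathlib

variable {V : Type} [AddCommGroup V] [Module ℝ V]

/-- The `ω`-perpendicular of a subspace `W`: `W^⊥ = {x | ω(x, y) = 0 for all y ∈ W}`. -/
def perp (ω : V →ₗ[ℝ] V →ₗ[ℝ] ℝ) (W : Submodule ℝ V) : Submodule ℝ V where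
  carrier := {x | ∀ y ∈ W, ω x y = 0}
  zero_mem' := by intro y _; simp
  add_mem' := by
    intro a b ha hb y hy
    simp [map_add, LinearMap.add_apply, ha y hy, hb y hy]
  smul_mem' := by
    intro c a ha y hy
    simp [map_smul, LinearMap.smul_apply, ha y hy]

/-- The group `U_W` of symplectic automorphisms of `(V, ω)` fixing `W^⊥` pointwise,
as a set of linear automorphisms of `V`. -/
def sympFixingPerp (ω : V →ₗ[ℝ] V →ₗ[ℝ] ℝ) (W : Submodule ℝ V) : Set (V ≃ₗ[ℝ] V) :=
  {g | (∀ x y, ω (g x) (g y) = ω x y) ∧ ∀ x ∈ perp ω W, g x = x}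

/-- For isotropic subspaces `I, J` of a real symplectic vector space `(V, ω)` one has
`U_J ⊆ U_I` if and only if `J ⊆ I`, where `U_W` is the group of symplectic automorphisms
fixing `W^⊥` pointwise. -/
theorem sympFixingPerp_subset_iff [FiniteDimensional ℝ V]
    (ω : V →ₗ[ℝ] V →ₗ[ℝ] ℝ)
    (halt : ∀ x, ω x x = 0)
    (hnondeg : ∀ x, (∀ y, ω x y = 0) → x = 0)
    (I J : Submodule ℝ V)
    (hI : ∀ x ∈ I, ∀ y ∈ I, ω x y = 0)
    (hJ : ∀ x ∈ J, ∀ y ∈ J, ω x y = 0) :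
    sympFixingPerp ω J ⊆ sympFixingPerp ω I ↔ J ≤ I := by
  have hskew : ∀ x y, ω x y = - ω y x := by
    intro x y
    have h := halt (x + y)
    simp only [map_add, LinearMap.add_apply, halt x, halt y] at h
    linarith
  constructor
  · intro h v hv
    by_contra hvI
    -- the symplectic transvection along v
    set f : V →ₗ[ℝ] V := LinearMap.id + (ω.flip v).smulRight v with hf
    set g' : V →ₗ[ℝ] V := LinearMap.id - (ω.flip v).smulRight v with hg'
    have hfx : ∀ x, f x = x + ω x v • v := fun x => rfl
    have hgx : ∀ x, g' x = x - ω x v • v := fun x => rfl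
    have hfg : ∀ x, f (g' x) = x := by
      intro x
      rw [hgx, hfx]
      simp [map_sub, map_smul, halt v]
    have hgf : ∀ x, g' (f x) = x := by
      intro x
      rw [hfx, hgx]
      simp [map_add, map_smul, halt v]
    let T : V ≃ₗ[ℝ] V := LinearEquiv.ofLinear f g'
      (by ext x; exact hfg x) (by ext x; exact hgf x)
    have hTx : ∀ x, T x = x + ω x v • v := fun x => rfl
    have hTJ : T ∈ sympFixingPerp ω J := by
      constructor
      · intro x y
        rw [hTx, hTx]
        simp only [map_add, map_smul, LinearMap.add_apply, LinearMap.smul_apply,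
          smul_eq_mul, halt v]
        have := hskew x v
        have := hskew y v
        rw [hskew y v]
        ring
      · intro x hx
        rw [hTx, hx v hv]
        simp
    have hTI := h hTJ
    have hv0 : v ≠ 0 := fun h0 => hvI (h0 ▸ I.zero_mem)
    have hperp : ∀ x ∈ perp ω I, ω x v = 0 := by
      intro x hx
      have := hTI.2 x hx
      rw [hTx] at this
      have h2 : ω x v • v = 0 := by
        have := congrArg (fun z => z - x) this
        simpa using this
      rcases smul_eq_zero.mp h2 with h3 | h3
      · exact h3
      · exact absurd h3 hv0
    -- double orthogonal
    have hrefl : LinearMap.IsRefl ω := fun x y hxy => by rw [hskew y x, hxy, neg_zero]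
    have hnd : LinearMap.BilinForm.Nondegenerate (R := ℝ) (M := V) ω :=
      hrefl.nondegenerate_iff_separatingLeft.mpr (fun m hm => hnondeg m hm)
    have hperp_eq : ∀ W : Submodule ℝ V, perp ω W = LinearMap.BilinForm.orthogonal ω W := by
      intro W
      ext x
      constructor
      · intro hx n hn
        have h1 := hx n hn
        show ω n x = 0
        rw [hskew n x, h1, neg_zero]
      · intro hx y hy
        have := hx y hy
        rw [hskew x y, this, neg_zero]
    have hdouble := LinearMap.BilinForm.orthogonal_orthogonal (B := ω) hnd hrefl I
    apply hvI
    rw [← hdouble]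
    intro n hn
    have : n ∈ perp ω I := by rw [hperp_eq]; exact hn
    exact hperp n this
  · intro hJI g hg
    exact ⟨hg.1, fun x hx => hg.2 x (fun y hy => hx y (hJI hy))⟩
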